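/- Define B_m(q) = (q−1)^{-m+1} ∑_{r=0}^m (−1)^r C(m,r) r/(q^r−1) for m ≥ 1 (with the r = 0 term read as 1/log q) and B_0(q) = (q−1)/log q. Then for all n ≥ 0, ∑_{m=0}^n (−1)^m C(n,m) q^m B_m(q) = (−1)^n B_n(q) + δ_{1n}, where δ_{1n} = 1 if n = 1 and 0 otherwise. -/

import Mathlib

open Finset


open Finset

noncomputable def gfun (q : ℝ) (r : ℕ) : ℝ :=
  if r = 0 then 1 / Real.log q else r / (q ^ r - 1)

lemma comb_sum (n : ℕ) :
    ∑ r ∈ range (n + 1), (-1 : ℝ) ^ r * (n.choose r : ℝ) * r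
      = if n = 1 then -1 else 0 := by
  cases n with
  | zero => simp
  | succ N =>
    rw [Finset.sum_range_succ'];
    have h : ∀ s, (-1:ℝ)^(s+1) * ((N+1).choose (s+1) : ℝ) * ((s:ℝ)+1)
        = (-((N:ℝ)+1)) * ((-1:ℝ)^s * (N.choose s : ℝ)) := by
      intro s
      have h2 : ((N:ℝ) + 1) * (N.choose s : ℝ) = ((N+1).choose (s+1) : ℝ) * ((s:ℝ)+1) := by
        exact_mod_cast congrArg (Nat.cast (R := ℝ)) (Nat.add_one_mul_choose_eq N s)
      rw [pow_succ]
      linear_combination ((-1:ℝ)^s) * h2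
    push_cast
    simp only [h]
    rw [← Finset.mul_sum]
    have hI : (∑ s ∈ range (N+1), (-1:ℝ)^s * (N.choose s : ℝ)) = if N = 0 then 1 else 0 := by
      exact_mod_cast congrArg (Int.cast (R := ℝ)) (Int.alternating_sum_range_choose (n := N))
    rw [hI]
    rcases Nat.eq_zero_or_pos N with h0 | h0
    · subst h0; norm_num
    · have hN : N ≠ 0 := h0.ne'
      have hN1 : N + 1 ≠ 1 := by omega
      simp [hN, hN1]

lemma lemA (q : ℝ) (n r : ℕ) :
    ∑ m ∈ range (n + 1), (-1:ℝ)^m * (n.choose m : ℝ) * q^m * (q-1)^(n-m) * (m.choose r : ℝ)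
      = (-1:ℝ)^n * (n.choose r : ℝ) * q^r := by
  rcases lt_or_ge n r with hr | hr
  · rw [Finset.sum_eq_zero, Nat.choose_eq_zero_of_lt hr]
    · simp
    · intro m hm
      rw [mem_range] at hm
      rw [Nat.choose_eq_zero_of_lt (show m < r by omega)]
      simp
  · set N := n - r with hN
    have hrN : r + N = n := by omega
    have hsub : ∑ m ∈ range (n + 1),
          (-1:ℝ)^m * (n.choose m : ℝ) * q^m * (q-1)^(n-m) * (m.choose r : ℝ)
        = ∑ m ∈ Ico r (n+1),
          (-1:ℝ)^m * (n.choose m : ℝ) * q^m * (q-1)^(n-m) * (m.choose r : ℝ) := by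
      rw [range_eq_Ico]
      refine (Finset.sum_subset (Finset.Ico_subset_Ico (Nat.zero_le r) le_rfl) ?_).symm
      intro m hm hm2
      rw [mem_Ico] at hm hm2
      rw [Nat.choose_eq_zero_of_lt (show m < r by omega)]
      simp
    rw [hsub, Finset.sum_Ico_eq_sum_range]
    have hlen : n + 1 - r = N + 1 := by omega
    rw [hlen]
    have key : ∀ k ∈ range (N+1),
        (-1:ℝ)^(r+k) * (n.choose (r+k) : ℝ) * q^(r+k) * (q-1)^(n-(r+k)) * ((r+k).choose r : ℝ)
        = ((-1:ℝ)^r * q^r * (n.choose r : ℝ)) * ((-q)^k * (q-1)^(N-k) * ((N.choose k) : ℝ)) := by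
      intro k hk
      rw [mem_range] at hk
      have hkn : r + k ≤ n := by omega
      have hcc : (n.choose (r+k) : ℝ) * ((r+k).choose r : ℝ)
          = (n.choose r : ℝ) * (N.choose k : ℝ) := by
        rw [hN]
        have := Nat.choose_mul (n := n) (Nat.le_add_right r k)
        rw [Nat.add_sub_cancel_left] at this
        exact_mod_cast congrArg (Nat.cast (R:=ℝ)) this
      have hnn : n - (r+k) = N - k := by omega
      rw [hnn]
      linear_combination ((-1:ℝ)^(r+k) * q^(r+k) * (q-1)^(N-k)) * hcc
    rw [Finset.sum_congr rfl key, ← Finset.mul_sum, ← add_pow]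
    have h1 : (-q) + (q-1) = (-1:ℝ) := by ring
    rw [h1, ← hrN, pow_add]
    ring

lemma gmul (q : ℝ) (hq0 : 0 < q) (hq1 : q < 1) (r : ℕ) :
    (q ^ r - 1) * gfun q r = (r : ℝ) := by
  rcases Nat.eq_zero_or_pos r with h0 | h0
  · subst h0; simp [gfun]
  · have hlt : q ^ r < 1 := pow_lt_one₀ hq0.le hq1 h0.ne'
    have hne : q ^ r - 1 ≠ 0 := by linarith
    rw [gfun, if_neg h0.ne', mul_div_cancel₀ _ hne]

lemma key_aux_qb (q : ℝ) (hq0 : 0 < q) (hq1 : q < 1) (n : ℕ) :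
    ∑ m ∈ range (n+1), (-1:ℝ)^m * (n.choose m : ℝ) * q^m * (q-1)^(n-m) *
        (∑ r ∈ range (m+1), (-1:ℝ)^r * (m.choose r : ℝ) * gfun q r)
      = (-1:ℝ)^n * (∑ r ∈ range (n+1), (-1:ℝ)^r * (n.choose r : ℝ) * gfun q r)
        + (if n = 1 then 1 else 0) := by
  have hT : ∀ m, m ≤ n → (∑ r ∈ range (m+1), (-1:ℝ)^r * (m.choose r : ℝ) * gfun q r)
      = ∑ r ∈ range (n+1), (-1:ℝ)^r * (m.choose r : ℝ) * gfun q r := by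
    intro m hm
    refine Finset.sum_subset (Finset.range_subset_range.mpr (by omega)) ?_
    intro r hr hr2
    rw [mem_range] at hr hr2
    rw [Nat.choose_eq_zero_of_lt (show m < r by omega)]
    simp
  have step1 : ∑ m ∈ range (n+1), (-1:ℝ)^m * (n.choose m : ℝ) * q^m * (q-1)^(n-m) *
        (∑ r ∈ range (m+1), (-1:ℝ)^r * (m.choose r : ℝ) * gfun q r)
      = ∑ r ∈ range (n+1), ((-1:ℝ)^r * gfun q r) *
        (∑ m ∈ range (n+1), (-1:ℝ)^m * (n.choose m : ℝ) * q^m * (q-1)^(n-m) * (m.choose r : ℝ)) := by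
    calc ∑ m ∈ range (n+1), (-1:ℝ)^m * (n.choose m : ℝ) * q^m * (q-1)^(n-m) *
          (∑ r ∈ range (m+1), (-1:ℝ)^r * (m.choose r : ℝ) * gfun q r)
        = ∑ m ∈ range (n+1), ∑ r ∈ range (n+1),
            ((-1:ℝ)^r * gfun q r) *
              ((-1:ℝ)^m * (n.choose m : ℝ) * q^m * (q-1)^(n-m) * (m.choose r : ℝ)) := by
          refine Finset.sum_congr rfl fun m hm => ?_
          rw [mem_range] at hm
          rw [hT m (by omega), Finset.mul_sum]
          exact Finset.sum_congr rfl fun r _ => by ring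
      _ = ∑ r ∈ range (n+1), ∑ m ∈ range (n+1),
            ((-1:ℝ)^r * gfun q r) *
              ((-1:ℝ)^m * (n.choose m : ℝ) * q^m * (q-1)^(n-m) * (m.choose r : ℝ)) :=
          Finset.sum_comm
      _ = _ := by
          exact Finset.sum_congr rfl fun r _ => by rw [Finset.mul_sum]
  rw [step1]
  have step2 : ∀ r ∈ range (n+1), ((-1:ℝ)^r * gfun q r) *
        (∑ m ∈ range (n+1), (-1:ℝ)^m * (n.choose m : ℝ) * q^m * (q-1)^(n-m) * (m.choose r : ℝ))
      = (-1:ℝ)^n * ((-1:ℝ)^r * (n.choose r : ℝ) * gfun q r)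
        + (-1:ℝ)^n * ((-1:ℝ)^r * (n.choose r : ℝ) * (r:ℝ)) := by
    intro r _
    rw [lemA]
    have hg := gmul q hq0 hq1 r
    linear_combination ((-1:ℝ)^n * (-1:ℝ)^r * (n.choose r : ℝ)) * hg
  rw [Finset.sum_congr rfl step2, Finset.sum_add_distrib, ← Finset.mul_sum, ← Finset.mul_sum,
    comb_sum]
  congr 1
  rcases eq_or_ne n 1 with h1 | h1 <;> simp [h1]




/-- The `q`-Bernoulli numbers: `B_0(q) = (q-1)/log q` and, for `m ≥ 1`,
`B_m(q) = (q-1)^{1-m} (∑_{r=1}^m (-1)^r C(m,r) r/(q^r-1) + 1/log q)`. -/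
noncomputable def qBern (q : ℝ) (m : ℕ) : ℝ :=
  if m = 0 then (q - 1) / Real.log q
  else (q - 1) ^ (1 - (m : ℤ)) *
    (∑ r ∈ Finset.Icc 1 m, (-1 : ℝ) ^ r * (m.choose r : ℝ) * r / (q ^ r - 1) + 1 / Real.log q)


lemma qBern_eq (q : ℝ) (m : ℕ) :
    qBern q m = (q - 1) ^ (1 - (m : ℤ)) *
      ∑ r ∈ range (m+1), (-1:ℝ)^r * (m.choose r : ℝ) * gfun q r := by
  rcases Nat.eq_zero_or_pos m with h0 | h0
  · subst h0
    simp [qBern, gfun, div_eq_mul_inv, one_div]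
  · rw [qBern, if_neg h0.ne']
    congr 1
    rw [Finset.sum_range_succ', ← Finset.Ico_add_one_right_eq_Icc, Finset.sum_Ico_eq_sum_range]
    congr 1
    · refine Finset.sum_congr (by norm_num) fun i hi => ?_
      rw [Nat.add_comm 1 i, gfun, if_neg i.succ_ne_zero]
      push_cast
      ring
    · simp [gfun]

theorem stmt_10 (q : ℝ) (hq0 : 0 < q) (hq1 : q < 1) (n : ℕ) :
    ∑ m ∈ Finset.range (n + 1), (-1 : ℝ) ^ m * (n.choose m : ℝ) * q ^ m * qBern q m
      = (-1 : ℝ) ^ n * qBern q n + (if n = 1 then 1 else 0) := by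
  have hc : q - 1 ≠ 0 := by linarith
  have hcz : (q - 1) ^ ((n:ℤ) - 1) ≠ 0 := zpow_ne_zero _ hc
  apply mul_right_cancel₀ hcz
  rw [Finset.sum_mul, add_mul]
  have hL : ∑ m ∈ Finset.range (n + 1),
        (-1 : ℝ) ^ m * (n.choose m : ℝ) * q ^ m * qBern q m * (q - 1) ^ ((n:ℤ) - 1)
      = ∑ m ∈ Finset.range (n+1), (-1:ℝ)^m * (n.choose m : ℝ) * q^m * (q-1)^(n-m) *
          (∑ r ∈ Finset.range (m+1), (-1:ℝ)^r * (m.choose r : ℝ) * gfun q r) := by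
    refine Finset.sum_congr rfl fun m hm => ?_
    rw [Finset.mem_range] at hm
    rw [qBern_eq]
    have hz : (q - 1 : ℝ) ^ (1 - (m:ℤ)) * (q - 1) ^ ((n:ℤ) - 1) = (q - 1) ^ ((n - m : ℕ)) := by
      rw [← zpow_add₀ hc]
      have he : (1 - (m:ℤ)) + ((n:ℤ) - 1) = ((n - m : ℕ) : ℤ) := by
        push_cast [Nat.cast_sub (show m ≤ n by omega)]
        ring
      rw [he, zpow_natCast]
    linear_combination ((-1:ℝ)^m * (n.choose m : ℝ) * q^m *
      (∑ r ∈ Finset.range (m+1), (-1:ℝ)^r * (m.choose r : ℝ) * gfun q r)) * hz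
  rw [hL, key_aux_qb q hq0 hq1 n]
  have hR1 : (-1:ℝ)^n * qBern q n * (q - 1) ^ ((n:ℤ) - 1)
      = (-1:ℝ)^n * (∑ r ∈ Finset.range (n+1), (-1:ℝ)^r * (n.choose r : ℝ) * gfun q r) := by
    rw [qBern_eq]
    have hz : (q - 1 : ℝ) ^ (1 - (n:ℤ)) * (q - 1) ^ ((n:ℤ) - 1) = 1 := by
      rw [← zpow_add₀ hc]
      norm_num
    linear_combination ((-1:ℝ)^n *
      (∑ r ∈ Finset.range (n+1), (-1:ℝ)^r * (n.choose r : ℝ) * gfun q r)) * hz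
  rw [hR1]
  congr 1
  rcases eq_or_ne n 1 with h1 | h1
  · subst h1; norm_num
  · simp [h1]
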